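/- Let a, b, c, x, y be five distinct points of ℝ² no three of which are collinear, with x ∈ convexHull ℝ {a,b,c} and y ∈ convexHull ℝ {a,b,c}. Then exactly one of the following three alternatives holds: x ∈ convexHull ℝ {a,b,y}, x ∈ convexHull ℝ {a,c,y}, x ∈ convexHull ℝ {b,c,y}. -/

import Mathlib

open Set

/-- Orientation sign of a triple of points in the plane: the sign of the determinant of
the matrix with columns `y - x` and `z - x`. -/
noncomputable def osign (x y z : Fin 2 → ℝ) : ℝ :=
  Real.sign ((y 0 - x 0) * (z 1 - x 1) - (y 1 - x 1) * (z 0 - x 0))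

/-- A planar point set is in general position if no three distinct points are collinear. -/
def GenPos (X : Set (Fin 2 → ℝ)) : Prop :=
  ∀ x ∈ X, ∀ y ∈ X, ∀ z ∈ X, x ≠ y → y ≠ z → x ≠ z →
    ¬ Collinear ℝ ({x, y, z} : Set (Fin 2 → ℝ))

/-- A convex geometry on a finite set `J`: a closure operator satisfying the
anti-exchange axiom. -/
structure ConvexGeometry (J : Type) [Fintype J] where
  cl : Set J → Set J
  extensive : ∀ A : Set J, A ⊆ cl A
  mono : ∀ A B : Set J, A ⊆ B → cl A ⊆ cl B
  idem : ∀ A : Set J, cl (cl A) = cl A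
  antiExchange : ∀ A : Set J, cl A = A → ∀ x y : J, x ≠ y → x ∉ A → y ∉ A →
    x ∈ cl (A ∪ {y}) → y ∉ cl (A ∪ {x})

variable {J : Type} [Fintype J]

/-- A set is dependent if some element lies in the closure of the rest. -/
def ConvexGeometry.Dependent (G : ConvexGeometry J) (D : Set J) : Prop :=
  ∃ x ∈ D, x ∈ G.cl (D \ {x})

/-- A circuit is an inclusion-minimal dependent set. -/
def ConvexGeometry.IsCircuit (G : ConvexGeometry J) (C : Set J) : Prop :=
  G.Dependent C ∧ ∀ D ⊆ C, G.Dependent D → D = C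

/-- A convex 4-geometry: all circuits have exactly 4 elements. -/
def ConvexGeometry.Is4Geometry (G : ConvexGeometry J) : Prop :=
  ∀ C : Set J, G.IsCircuit C → C.ncard = 4

/-- `(T, a)` is a rooted triangle of `G` if `T ∪ {a}` is a circuit with root `a`. -/
def ConvexGeometry.RT (G : ConvexGeometry J) (T : Set J) (a : J) : Prop :=
  a ∉ T ∧ G.IsCircuit (insert a T) ∧ a ∈ G.cl T

/-- A realization of a convex geometry in the plane. -/
def IsRealization (G : ConvexGeometry J) (f : J → (Fin 2 → ℝ)) : Prop :=
  Function.Injective f ∧ GenPos (Set.range f) ∧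
    ∀ Y : Set J, f '' (G.cl Y) = convexHull ℝ (f '' Y) ∩ Set.range f

/-- `G.rest n` is the set `Jₙ` remaining after removing the first `n` layers. -/
def ConvexGeometry.rest (G : ConvexGeometry J) : ℕ → Set J
  | 0 => Set.univ
  | n + 1 => {x ∈ G.rest n | x ∈ G.cl (G.rest n \ {x})}

/-- The `n`-th layer: the extreme points of the restricted geometry on `G.rest n`. -/
def ConvexGeometry.layer (G : ConvexGeometry J) (n : ℕ) : Set J :=
  {x ∈ G.rest n | x ∉ G.cl (G.rest n \ {x})}


/-- determinant of the triple -/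
def det3 (p q r : Fin 2 → ℝ) : ℝ :=
  (q 0 - p 0) * (r 1 - p 1) - (q 1 - p 1) * (r 0 - p 0)

lemma collinear_of_det3 {p q r : Fin 2 → ℝ} (h : det3 p q r = 0) :
    Collinear ℝ ({p, q, r} : Set (Fin 2 → ℝ)) := by
  rw [collinear_iff_of_mem (show p ∈ ({p,q,r} : Set (Fin 2 → ℝ)) by simp)]
  unfold det3 at h
  by_cases hq0 : q 0 - p 0 = 0
  · by_cases hq1 : q 1 - p 1 = 0
    · refine ⟨r - p, ?_⟩
      intro z hz
      rcases hz with h1 | h1 | h1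
      · exact ⟨0, by rw [h1]; simp⟩
      · refine ⟨0, ?_⟩
        rw [h1]
        have : q = p := by funext i; fin_cases i <;> simp <;> linarith
        rw [this]; simp
      · exact ⟨1, by rw [h1]; simp⟩
    · refine ⟨q - p, ?_⟩
      intro z hz
      rcases hz with h1 | h1 | h1
      · exact ⟨0, by rw [h1]; simp⟩
      · exact ⟨1, by rw [h1]; simp⟩
      · refine ⟨(r 1 - p 1) / (q 1 - p 1), ?_⟩
        rw [h1]
        have hr0 : r 0 - p 0 = 0 := by
          rcases mul_eq_zero.mp (by linear_combination (r 1 - p 1) * hq0 - h :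
              (q 1 - p 1) * (r 0 - p 0) = 0) with h2 | h2
          · exact absurd h2 hq1
          · exact h2
        funext i; fin_cases i <;>
          simp only [Pi.vadd_apply, Pi.smul_apply, Pi.sub_apply, smul_eq_mul, vadd_eq_add, Pi.add_apply, Fin.zero_eta, Fin.mk_one]
        · field_simp; linarith
        · field_simp; ring
  · refine ⟨q - p, ?_⟩
    intro z hz
    rcases hz with h1 | h1 | h1
    · exact ⟨0, by rw [h1]; simp⟩
    · exact ⟨1, by rw [h1]; simp⟩
    · refine ⟨(r 0 - p 0) / (q 0 - p 0), ?_⟩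
      rw [h1]
      funext i; fin_cases i <;>
        simp only [Pi.vadd_apply, Pi.smul_apply, Pi.sub_apply, smul_eq_mul, vadd_eq_add, Pi.add_apply, Fin.zero_eta, Fin.mk_one]
      · field_simp; ring
      · field_simp; linarith

lemma mem_tri_combo (p q r z : Fin 2 → ℝ) :
    z ∈ convexHull ℝ ({p, q, r} : Set (Fin 2 → ℝ)) ↔
      ∃ α β γ : ℝ, 0 ≤ α ∧ 0 ≤ β ∧ 0 ≤ γ ∧ α + β + γ = 1 ∧
        z = α • p + β • q + γ • r := by
  constructor
  · intro hz
    rw [show ({p,q,r} : Set (Fin 2 → ℝ)) = insert p {q,r} from rfl,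
      convexHull_insert ⟨q, by simp⟩, convexHull_pair] at hz
    rw [mem_convexJoin] at hz
    obtain ⟨x, hx, w, hw, hzw⟩ := hz
    rw [Set.mem_singleton_iff] at hx
    subst hx
    obtain ⟨u, v, hu, hv, huv, hw⟩ := hw
    obtain ⟨s, t, hs, ht, hst, hz⟩ := hzw
    refine ⟨s, t * u, t * v, hs, by positivity, by positivity, by nlinarith, ?_⟩
    rw [← hz, ← hw]
    module
  · rintro ⟨α, β, γ, hα, hβ, hγ, hsum, rfl⟩
    by_cases hbg : β + γ = 0
    · have hβ0 : β = 0 := by linarith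
      have hγ0 : γ = 0 := by linarith
      have hα1 : α = 1 := by linarith
      subst hβ0; subst hγ0; subst hα1
      simp only [one_smul, zero_smul, add_zero]
      exact subset_convexHull ℝ _ (by simp)
    · have hbg' : 0 < β + γ := lt_of_le_of_ne (by linarith) (Ne.symm hbg)
      rw [show ({p,q,r} : Set (Fin 2 → ℝ)) = insert p {q,r} from rfl,
        convexHull_insert ⟨q, by simp⟩, convexHull_pair]
      rw [mem_convexJoin]
      refine ⟨p, rfl, (β / (β + γ)) • q + (γ / (β + γ)) • r,
        ⟨β / (β + γ), γ / (β + γ), by positivity, by positivity, by field_simp, rfl⟩,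
        α, β + γ, hα, le_of_lt hbg', by linarith, ?_⟩
      rw [smul_add, smul_smul, smul_smul]
      rw [mul_div_cancel₀ _ hbg, mul_div_cancel₀ _ hbg]
      rw [← add_assoc]

lemma st1 {X Y S D : ℝ} (hT : X * (D * D) = Y * S) (hY : 0 ≤ Y) (hS : 0 < S)
    (hD : D ≠ 0) : 0 ≤ X := by
  have hDD : 0 < D * D := mul_self_pos.mpr hD
  nlinarith [mul_nonneg hY hS.le]

lemma st2 {X Y S D : ℝ} (hT : X * (D * D) = Y * S) (hX : 0 ≤ X) (hS : 0 < S) :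
    0 ≤ Y := by
  nlinarith [mul_nonneg hX (mul_self_nonneg D)]

lemma carousel_arith {P Q R u v w : ℝ} (hP : P ≠ 0) (hQ : Q ≠ 0) (hR : R ≠ 0)
    (hu : 0 < u) (hv : 0 < v) (hw : 0 < w) (hid : u * P + v * Q + w * R = 0) :
    ((0 ≤ Q ∧ R ≤ 0) ∧ ¬(0 ≤ P ∧ Q ≤ 0) ∧ ¬(P ≤ 0 ∧ 0 ≤ R)) ∨
    ((0 ≤ P ∧ Q ≤ 0) ∧ ¬(0 ≤ Q ∧ R ≤ 0) ∧ ¬(P ≤ 0 ∧ 0 ≤ R)) ∨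
    ((P ≤ 0 ∧ 0 ≤ R) ∧ ¬(0 ≤ Q ∧ R ≤ 0) ∧ ¬(0 ≤ P ∧ Q ≤ 0)) := by
  rcases hP.lt_or_gt with hP' | hP' <;> rcases hQ.lt_or_gt with hQ' | hQ' <;>
    rcases hR.lt_or_gt with hR' | hR'
  · exfalso
    nlinarith [mul_neg_of_pos_of_neg hu hP', mul_neg_of_pos_of_neg hv hQ',
      mul_neg_of_pos_of_neg hw hR']
  · exact Or.inr (Or.inr ⟨⟨hP'.le, hR'.le⟩, fun h => by linarith [h.2],
      fun h => by linarith [h.2]⟩)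
  · exact Or.inl ⟨⟨hQ'.le, hR'.le⟩, fun h => by linarith [h.2], fun h => by linarith [h.2]⟩
  · exact Or.inr (Or.inr ⟨⟨hP'.le, hR'.le⟩, fun h => by linarith [h.2],
      fun h => by linarith [h.1]⟩)
  · exact Or.inr (Or.inl ⟨⟨hP'.le, hQ'.le⟩, fun h => by linarith [h.1],
      fun h => by linarith [h.1]⟩)
  · exact Or.inr (Or.inl ⟨⟨hP'.le, hQ'.le⟩, fun h => by linarith [h.2],
      fun h => by linarith [h.1]⟩)
  · exact Or.inl ⟨⟨hQ'.le, hR'.le⟩, fun h => by linarith [h.2], fun h => by linarith [h.1]⟩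
  · exfalso
    nlinarith [mul_pos hu hP', mul_pos hv hQ', mul_pos hw hR']

lemma mem_tri_iff {p q r z : Fin 2 → ℝ} (hD : det3 p q r ≠ 0) :
    z ∈ convexHull ℝ ({p, q, r} : Set (Fin 2 → ℝ)) ↔
      0 ≤ det3 q r z * det3 p q r ∧ 0 ≤ det3 r p z * det3 p q r ∧
        0 ≤ det3 p q z * det3 p q r := by
  rw [mem_tri_combo]
  constructor
  · rintro ⟨α, β, γ, hα, hβ, hγ, hsum, rfl⟩
    have hα' : α = 1 - β - γ := by linarith
    subst hα'
    have e1 : det3 q r ((1 - β - γ) • p + β • q + γ • r) = (1 - β - γ) * det3 p q r := by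
      unfold det3
      simp only [Pi.add_apply, Pi.smul_apply, smul_eq_mul]
      ring
    have e2 : det3 r p ((1 - β - γ) • p + β • q + γ • r) = β * det3 p q r := by
      unfold det3
      simp only [Pi.add_apply, Pi.smul_apply, smul_eq_mul]
      ring
    have e3 : det3 p q ((1 - β - γ) • p + β • q + γ • r) = γ * det3 p q r := by
      unfold det3
      simp only [Pi.add_apply, Pi.smul_apply, smul_eq_mul]
      ring
    rw [e1, e2, e3]
    refine ⟨?_, ?_, ?_⟩ <;> rw [mul_assoc]
    · exact mul_nonneg hα (mul_self_nonneg _)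
    · exact mul_nonneg hβ (mul_self_nonneg _)
    · exact mul_nonneg hγ (mul_self_nonneg _)
  · rintro ⟨h1, h2, h3⟩
    have hDD : (0:ℝ) < det3 p q r * det3 p q r := mul_self_pos.mpr hD
    refine ⟨det3 q r z / det3 p q r, det3 r p z / det3 p q r, det3 p q z / det3 p q r,
      ?_, ?_, ?_, ?_, ?_⟩
    · rw [← mul_div_mul_right _ _ hD]
      exact div_nonneg h1 hDD.le
    · rw [← mul_div_mul_right _ _ hD]
      exact div_nonneg h2 hDD.le
    · rw [← mul_div_mul_right _ _ hD]
      exact div_nonneg h3 hDD.le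
    · field_simp
      unfold det3
      ring
    · funext i
      fin_cases i <;>
        simp only [Pi.add_apply, Pi.smul_apply, smul_eq_mul, Fin.isValue, Fin.zero_eta, Fin.mk_one] <;>
        field_simp <;> (unfold det3; ring)


/-- For five distinct planar points `a, b, c, x, y`, no three collinear,
with `x` and `y` inside the triangle `abc`, exactly one of the three alternatives holds:
`x ∈ ch{a,b,y}`, `x ∈ ch{a,c,y}`, `x ∈ ch{b,c,y}` (the 3-carousel rule in the plane). -/
theorem three_carousel_in_plane (a b c x y : Fin 2 → ℝ)
    (hab : a ≠ b) (hac : a ≠ c) (hax : a ≠ x) (hay : a ≠ y)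
    (hbc : b ≠ c) (hbx : b ≠ x) (hby : b ≠ y)
    (hcx : c ≠ x) (hcy : c ≠ y) (hxy : x ≠ y)
    (hgp : ∀ p ∈ ({a, b, c, x, y} : Set (Fin 2 → ℝ)),
      ∀ q ∈ ({a, b, c, x, y} : Set (Fin 2 → ℝ)),
      ∀ r ∈ ({a, b, c, x, y} : Set (Fin 2 → ℝ)),
        p ≠ q → q ≠ r → p ≠ r → ¬ Collinear ℝ ({p, q, r} : Set (Fin 2 → ℝ)))
    (hx : x ∈ convexHull ℝ ({a, b, c} : Set (Fin 2 → ℝ)))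
    (hy : y ∈ convexHull ℝ ({a, b, c} : Set (Fin 2 → ℝ))) :
    (x ∈ convexHull ℝ ({a, b, y} : Set (Fin 2 → ℝ)) ∧
      x ∉ convexHull ℝ ({a, c, y} : Set (Fin 2 → ℝ)) ∧
      x ∉ convexHull ℝ ({b, c, y} : Set (Fin 2 → ℝ))) ∨
    (x ∉ convexHull ℝ ({a, b, y} : Set (Fin 2 → ℝ)) ∧
      x ∈ convexHull ℝ ({a, c, y} : Set (Fin 2 → ℝ)) ∧
      x ∉ convexHull ℝ ({b, c, y} : Set (Fin 2 → ℝ))) ∨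
    (x ∉ convexHull ℝ ({a, b, y} : Set (Fin 2 → ℝ)) ∧
      x ∉ convexHull ℝ ({a, c, y} : Set (Fin 2 → ℝ)) ∧
      x ∈ convexHull ℝ ({b, c, y} : Set (Fin 2 → ℝ))) := by
  have key : ∀ p ∈ ({a, b, c, x, y} : Set (Fin 2 → ℝ)),
      ∀ q ∈ ({a, b, c, x, y} : Set (Fin 2 → ℝ)),
      ∀ r ∈ ({a, b, c, x, y} : Set (Fin 2 → ℝ)),
        p ≠ q → q ≠ r → p ≠ r → det3 p q r ≠ 0 :=
    fun p hp q hq r hr h1 h2 h3 hd =>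
      hgp p hp q hq r hr h1 h2 h3 (collinear_of_det3 hd)
  have hD : det3 a b c ≠ 0 := key a (by simp) b (by simp) c (by simp) hab hbc hac
  have hbcx : det3 b c x ≠ 0 := key b (by simp) c (by simp) x (by simp) hbc hcx hbx
  have hcax : det3 c a x ≠ 0 := key c (by simp) a (by simp) x (by simp) hac.symm hax hcx
  have habx : det3 a b x ≠ 0 := key a (by simp) b (by simp) x (by simp) hab hbx hax
  have hbcy : det3 b c y ≠ 0 := key b (by simp) c (by simp) y (by simp) hbc hcy hby
  have hcay : det3 c a y ≠ 0 := key c (by simp) a (by simp) y (by simp) hac.symm hay hcy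
  have haby : det3 a b y ≠ 0 := key a (by simp) b (by simp) y (by simp) hab hby hay
  have hcyx : det3 c y x ≠ 0 := key c (by simp) y (by simp) x (by simp) hcy hxy.symm hcx
  have hyax : det3 y a x ≠ 0 := key y (by simp) a (by simp) x (by simp) hay.symm hax hxy.symm
  have hybx : det3 y b x ≠ 0 := key y (by simp) b (by simp) x (by simp) hby.symm hbx hxy.symm
  have hacy : det3 a c y ≠ 0 := by
    rw [show det3 a c y = -det3 c a y by unfold det3; ring]
    exact neg_ne_zero.mpr hcay
  obtain ⟨hx1, hx2, hx3⟩ := (mem_tri_iff hD).mp hx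
  obtain ⟨hy1, hy2, hy3⟩ := (mem_tri_iff hD).mp hy
  have hA : 0 < det3 b c x * det3 a b c :=
    lt_of_le_of_ne hx1 (Ne.symm (mul_ne_zero hbcx hD))
  have hB : 0 < det3 c a x * det3 a b c :=
    lt_of_le_of_ne hx2 (Ne.symm (mul_ne_zero hcax hD))
  have hC : 0 < det3 a b x * det3 a b c :=
    lt_of_le_of_ne hx3 (Ne.symm (mul_ne_zero habx hD))
  have hv : 0 < det3 b c y * det3 a b c :=
    lt_of_le_of_ne hy1 (Ne.symm (mul_ne_zero hbcy hD))
  have hw : 0 < det3 c a y * det3 a b c :=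
    lt_of_le_of_ne hy2 (Ne.symm (mul_ne_zero hcay hD))
  have hu : 0 < det3 a b y * det3 a b c :=
    lt_of_le_of_ne hy3 (Ne.symm (mul_ne_zero haby hD))
  have hP : -(det3 c y x * det3 a b c) ≠ 0 := neg_ne_zero.mpr (mul_ne_zero hcyx hD)
  have hQ : det3 y a x * det3 a b c ≠ 0 := mul_ne_zero hyax hD
  have hR : det3 y b x * det3 a b c ≠ 0 := mul_ne_zero hybx hD
  have hid : (det3 a b y * det3 a b c) * (-(det3 c y x * det3 a b c)) +
      (det3 b c y * det3 a b c) * (det3 y a x * det3 a b c) +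
      (det3 c a y * det3 a b c) * (det3 y b x * det3 a b c) = 0 := by
    unfold det3; ring
  have T1a : det3 b y x * det3 a b y * (det3 a b c * det3 a b c) =
      (-(det3 y b x * det3 a b c)) * (det3 a b y * det3 a b c) := by unfold det3; ring
  have T1b : det3 y a x * det3 a b y * (det3 a b c * det3 a b c) =
      (det3 y a x * det3 a b c) * (det3 a b y * det3 a b c) := by ring
  have T1c : det3 a b x * det3 a b y * (det3 a b c * det3 a b c) =
      (det3 a b x * det3 a b c) * (det3 a b y * det3 a b c) := by ring
  have T2a : det3 c y x * det3 a c y * (det3 a b c * det3 a b c) =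
      (-(det3 c y x * det3 a b c)) * (det3 c a y * det3 a b c) := by unfold det3; ring
  have T2b : det3 y a x * det3 a c y * (det3 a b c * det3 a b c) =
      (-(det3 y a x * det3 a b c)) * (det3 c a y * det3 a b c) := by unfold det3; ring
  have T2c : det3 a c x * det3 a c y * (det3 a b c * det3 a b c) =
      (det3 c a x * det3 a b c) * (det3 c a y * det3 a b c) := by unfold det3; ring
  have T3a : det3 c y x * det3 b c y * (det3 a b c * det3 a b c) =
      (-(-(det3 c y x * det3 a b c))) * (det3 b c y * det3 a b c) := by ring
  have T3b : det3 y b x * det3 b c y * (det3 a b c * det3 a b c) =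
      (det3 y b x * det3 a b c) * (det3 b c y * det3 a b c) := by ring
  have T3c : det3 b c x * det3 b c y * (det3 a b c * det3 a b c) =
      (det3 b c x * det3 a b c) * (det3 b c y * det3 a b c) := by ring
  rw [mem_tri_iff haby, mem_tri_iff hacy, mem_tri_iff hbcy]
  rcases carousel_arith hP hQ hR hu hv hw hid with
    ⟨⟨c1, c2⟩, n2, n3⟩ | ⟨⟨d1, d2⟩, n1, n3⟩ | ⟨⟨e1, e2⟩, n1, n2⟩
  · refine Or.inl ⟨⟨st1 T1a (by linarith) hu hD, st1 T1b c1 hu hD,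
      st1 T1c hC.le hu hD⟩, ?_, ?_⟩
    · rintro ⟨m1, m2, -⟩
      exact n2 ⟨st2 T2a m1 hw, by linarith [st2 T2b m2 hw]⟩
    · rintro ⟨m1, m2, -⟩
      exact n3 ⟨by linarith [st2 T3a m1 hv], st2 T3b m2 hv⟩
  · refine Or.inr (Or.inl ⟨?_, ⟨st1 T2a d1 hw hD, st1 T2b (by linarith) hw hD,
      st1 T2c hB.le hw hD⟩, ?_⟩)
    · rintro ⟨m1, m2, -⟩
      exact n1 ⟨st2 T1b m2 hu, by linarith [st2 T1a m1 hu]⟩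
    · rintro ⟨m1, m2, -⟩
      exact n3 ⟨by linarith [st2 T3a m1 hv], st2 T3b m2 hv⟩
  · refine Or.inr (Or.inr ⟨?_, ?_, ⟨st1 T3a (by linarith) hv hD, st1 T3b e2 hv hD,
      st1 T3c hA.le hv hD⟩⟩)
    · rintro ⟨m1, m2, -⟩
      exact n1 ⟨st2 T1b m2 hu, by linarith [st2 T1a m1 hu]⟩
    · rintro ⟨m1, m2, -⟩
      exact n2 ⟨st2 T2a m1 hw, by linarith [st2 T2b m2 hw]⟩
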